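/- Let k, q ∈ ℕ, let H be a k-labeled graph, and let i, a, b, a_1, …, a_q ∈ Fin k with a ≠ b, a ∈ {a_1, …, a_q, i} and b ∉ {a_1, …, a_q, i}. Assume no operator occurrence on the left-hand side is useless. Then θ_i(ρ_{a_1→i}(⋯ ρ_{a_q→i}(η_{a,b}(H)) ⋯)) = η_{i,b}(θ_i(ρ_{a_1→i}(⋯ ρ_{a_q→i}(H) ⋯))) as k-labeled graphs, up to label-preserving isomorphism. -/

import Mathlib

/-! ### `k`-labeled graphs and the basic operations on them -/

/-- A `k`-labeled graph: a simple graph together with a labeling of its vertices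
by labels from `Fin k`. -/
structure LGraph (k : ℕ) where
  V : Type
  G : SimpleGraph V
  lab : V → Fin k

namespace LGraph

variable {k : ℕ}

/-- The join operation `η_{a,b}`: add all edges between vertices of label `a`
and vertices of label `b`. -/
def join (a b : Fin k) (H : LGraph k) : LGraph k where
  V := H.V
  G :=
    { Adj := fun u v =>
        H.G.Adj u v ∨ (u ≠ v ∧ ((H.lab u = a ∧ H.lab v = b) ∨ (H.lab u = b ∧ H.lab v = a)))
      symm := by
        refine ⟨?_⟩
        intro u v h
        rcases h with h | ⟨hne, h⟩
        · exact Or.inl (H.G.adj_symm h)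
        · refine Or.inr ⟨hne.symm, ?_⟩
          rcases h with ⟨h1, h2⟩ | ⟨h1, h2⟩
          · exact Or.inr ⟨h2, h1⟩
          · exact Or.inl ⟨h2, h1⟩
      loopless := by
        refine ⟨?_⟩
        intro v h
        rcases h with h | ⟨hne, _⟩
        · exact H.G.irrefl h
        · exact hne rfl }
  lab := H.lab

/-- The relabel operation `ρ_{a→b}`: every vertex of label `a` gets label `b` instead. -/
def relabel (a b : Fin k) (H : LGraph k) : LGraph k where
  V := H.V
  G := H.G
  lab := fun v => if H.lab v = a then b else H.lab v

/-- The fuse operation `θ_i`: replace all vertices of label `i` by a single new vertex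
(represented by `none`) of label `i` whose neighbourhood is the union of their
neighbourhoods. -/
def fuse (i : Fin k) (H : LGraph k) : LGraph k where
  V := Option {v : H.V // H.lab v ≠ i}
  G :=
    { Adj := fun x y =>
        match x, y with
        | some u, some v => H.G.Adj u.1 v.1
        | some u, none => ∃ w, H.lab w = i ∧ H.G.Adj u.1 w
        | none, some v => ∃ w, H.lab w = i ∧ H.G.Adj w v.1
        | none, none => False
      symm := by
        refine ⟨?_⟩
        rintro (_ | u) (_ | v) h
        · exact h
        · obtain ⟨w, hw, ha⟩ := h
          exact ⟨w, hw, ha.symm⟩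
        · obtain ⟨w, hw, ha⟩ := h
          exact ⟨w, hw, ha.symm⟩
        · exact H.G.adj_symm h
      loopless := by
        refine ⟨?_⟩
        rintro (_ | v) h
        · exact h
        · exact H.G.irrefl h }
  lab := fun x =>
    match x with
    | some u => H.lab u.1
    | none => i

/-- Disjoint union `H1 ⊕ H2` of two `k`-labeled graphs. -/
def union (H1 H2 : LGraph k) : LGraph k where
  V := H1.V ⊕ H2.V
  G := H1.G ⊕g H2.G
  lab := Sum.elim H1.lab H2.lab

/-- Label-preserving isomorphism of `k`-labeled graphs. -/
def LIso (H1 H2 : LGraph k) : Prop :=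
  ∃ e : H1.G ≃g H2.G, ∀ v, H2.lab (e v) = H1.lab v

/-- The occurrence of the join operator `η_{a,b}` applied to `H` is not useless,
i.e. it creates at least one new edge. -/
def joinUseful (a b : Fin k) (H : LGraph k) : Prop :=
  ∃ u v : H.V, u ≠ v ∧ H.lab u = a ∧ H.lab v = b ∧ ¬ H.G.Adj u v

/-- The occurrence of the fuse operator `θ_i` applied to `H` is not useless,
i.e. `H` has at least two vertices of label `i`. -/
def fuseUseful (i : Fin k) (H : LGraph k) : Prop :=
  ∃ u v : H.V, u ≠ v ∧ H.lab u = i ∧ H.lab v = i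

/-- The occurrence of a relabel operator `ρ_{a→b}` applied to `H` is not useless,
i.e. `H` has a vertex of label `a`. -/
def relabelUseful (a : Fin k) (H : LGraph k) : Prop :=
  ∃ v : H.V, H.lab v = a

/-- `relabelSeq i [a₁, …, a_q] H = ρ_{a₁→i}(⋯(ρ_{a_q→i}(H))⋯)`. -/
def relabelSeq (i : Fin k) : List (Fin k) → LGraph k → LGraph k
  | [], H => H
  | a :: as, H => relabel a i (relabelSeq i as H)

/-- None of the relabel operators in `relabelSeq i as H` is useless (this includes
that none of them has the form `ρ_{a→a}`). -/
def relabelSeqUseful (i : Fin k) : List (Fin k) → LGraph k → Prop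
  | [], _ => True
  | a :: as, H => relabelSeqUseful i as H ∧ a ≠ i ∧ relabelUseful a (relabelSeq i as H)

end LGraph

open LGraph

namespace LGraphAux

variable {k : ℕ}

/-- The effect of `relabelSeq` on a labeling function. -/
def labSeq (i : Fin k) {V : Type} : List (Fin k) → (V → Fin k) → V → Fin k
  | [], f => f
  | a :: as, f => fun v => if labSeq i as f v = a then i else labSeq i as f v

lemma relabelSeq_eq (i : Fin k) (as : List (Fin k)) (K : LGraph k) :
    relabelSeq i as K = ⟨K.V, K.G, labSeq i as K.lab⟩ := by
  induction as with
  | nil => rfl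
  | cons a as ih =>
      show relabel a i (relabelSeq i as K) = _
      rw [ih]
      rfl

lemma labSeq_or (i : Fin k) {V : Type} (as : List (Fin k)) (f : V → Fin k) (v : V) :
    labSeq i as f v = f v ∨ labSeq i as f v = i := by
  induction as with
  | nil => exact Or.inl rfl
  | cons a as ih =>
      show (if labSeq i as f v = a then i else labSeq i as f v) = f v ∨
        (if labSeq i as f v = a then i else labSeq i as f v) = i
      split
      · exact Or.inr rfl
      · exact ih

lemma labSeq_eq_i (i : Fin k) {V : Type} {as : List (Fin k)} {f : V → Fin k} {v : V}
    (h : f v ∈ as ∨ f v = i) : labSeq i as f v = i := by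
  induction as with
  | nil =>
      rcases h with h | h
      · exact absurd h List.not_mem_nil
      · exact h
  | cons a as ih =>
      show (if labSeq i as f v = a then i else labSeq i as f v) = i
      rcases h with h | h
      · rcases List.mem_cons.mp h with h | h
        · rcases labSeq_or i as f v with h' | h'
          · simp [h', h]
          · simp [h']
        · simp [ih (Or.inl h)]
      · simp [ih (Or.inr h)]

lemma labSeq_eq_self (i : Fin k) {V : Type} {as : List (Fin k)} {f : V → Fin k} {v : V}
    (h1 : f v ∉ as) (h2 : f v ≠ i) : labSeq i as f v = f v := by
  induction as with
  | nil => rfl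
  | cons a as ih =>
      have hne : f v ≠ a := fun h => h1 (h ▸ List.mem_cons_self)
      have h1' : f v ∉ as := fun h => h1 (List.mem_cons_of_mem a h)
      show (if labSeq i as f v = a then i else labSeq i as f v) = f v
      rw [ih h1']
      simp [hne]

end LGraphAux

open LGraphAux

/-- rule 4: if `a ∈ {a₁, …, a_q, i}` and `b ∉ {a₁, …, a_q, i}`, then
`θ_i(ρ_{a₁→i}(⋯ρ_{a_q→i}(η_{a,b}(H))⋯)) = η_{i,b}(θ_i(ρ_{a₁→i}(⋯ρ_{a_q→i}(H)⋯)))`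
provided that no operator occurrence on the left-hand side is useless. -/
theorem fuse_relabelSeq_join_oneSide {k : ℕ} (H : LGraph k) (i a b : Fin k)
    (as : List (Fin k)) (hab : a ≠ b)
    (ha : a ∈ as ∨ a = i) (hb : b ∉ as ∧ b ≠ i)
    (hjoin : joinUseful a b H)
    (hseq : relabelSeqUseful i as (join a b H))
    (hfuse : fuseUseful i (relabelSeq i as (join a b H))) :
    LIso (fuse i (relabelSeq i as (join a b H)))
         (join i b (fuse i (relabelSeq i as H))) := by
  obtain ⟨u₀, v₀, hne₀, hu₀, hv₀, hnadj₀⟩ := hjoin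
  rw [relabelSeq_eq, relabelSeq_eq]
  set L : H.V → Fin k := labSeq i as H.lab with hL
  have hLa : ∀ v : H.V, H.lab v = a → L v = i := by
    intro v hv
    apply labSeq_eq_i
    rcases ha with h | h
    · exact Or.inl (hv ▸ h)
    · exact Or.inr (hv.trans h)
  have hLb : ∀ v : H.V, L v = b ↔ H.lab v = b := by
    intro v
    constructor
    · intro h
      simp only [hL] at h
      rcases labSeq_or i as H.lab v with h' | h'
      · exact h'.symm.trans h
      · exact ((hb.2) (h'.symm.trans h).symm).elim
    · intro h
      rw [hL, labSeq_eq_self i (h ▸ hb.1) (h ▸ hb.2)]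
      exact h
  -- the vertex types of the two sides are definitionally equal
  refine ⟨⟨Equiv.refl (Option {v : H.V // L v ≠ i}), ?_⟩, ?_⟩
  · rintro (_ | u) (_ | v)
    · -- none, none
      show False ∨ ((none : Option _) ≠ none ∧ _) ↔ False
      simp
    · -- none, some v
      show (∃ w, L w = i ∧ H.G.Adj w v.1) ∨ _ ∧ ((i = i ∧ L v.1 = b) ∨ (i = b ∧ L v.1 = i)) ↔
        ∃ w, L w = i ∧ (H.G.Adj w v.1 ∨
          (w ≠ v.1 ∧ ((H.lab w = a ∧ H.lab v.1 = b) ∨ (H.lab w = b ∧ H.lab v.1 = a))))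
      constructor
      · rintro (⟨w, hw, hadj⟩ | ⟨-, ⟨-, hvb⟩ | ⟨hib, -⟩⟩)
        · exact ⟨w, hw, Or.inl hadj⟩
        · refine ⟨u₀, hLa u₀ hu₀, Or.inr ⟨?_, Or.inl ⟨hu₀, (hLb v.1).mp hvb⟩⟩⟩
          intro h
          exact v.2 (h ▸ hLa u₀ hu₀)
        · exact absurd hib.symm hb.2
      · rintro ⟨w, hw, hadj | ⟨hne, ⟨hwa, hvb⟩ | ⟨hwb, hva⟩⟩⟩
        · exact Or.inl ⟨w, hw, hadj⟩
        · exact Or.inr ⟨(Option.some_ne_none _).symm, Or.inl ⟨rfl, (hLb v.1).mpr hvb⟩⟩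
        · exact absurd (hLa v.1 hva) v.2
    · -- some u, none
      show (∃ w, L w = i ∧ H.G.Adj u.1 w) ∨ _ ∧ ((L u.1 = i ∧ i = b) ∨ (L u.1 = b ∧ i = i)) ↔
        ∃ w, L w = i ∧ (H.G.Adj u.1 w ∨
          (u.1 ≠ w ∧ ((H.lab u.1 = a ∧ H.lab w = b) ∨ (H.lab u.1 = b ∧ H.lab w = a))))
      constructor
      · rintro (⟨w, hw, hadj⟩ | ⟨-, ⟨hui, -⟩ | ⟨hub, -⟩⟩)
        · exact ⟨w, hw, Or.inl hadj⟩
        · exact absurd hui u.2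
        · refine ⟨u₀, hLa u₀ hu₀, Or.inr ⟨?_, Or.inr ⟨(hLb u.1).mp hub, hu₀⟩⟩⟩
          intro h
          exact u.2 (h ▸ hLa u₀ hu₀)
      · rintro ⟨w, hw, hadj | ⟨hne, ⟨hua, hwb⟩ | ⟨hub, hwa⟩⟩⟩
        · exact Or.inl ⟨w, hw, hadj⟩
        · exact absurd (hLa u.1 hua) u.2
        · exact Or.inr ⟨Option.some_ne_none _, Or.inr ⟨(hLb u.1).mpr hub, rfl⟩⟩
    · -- some u, some v
      show H.G.Adj u.1 v.1 ∨ _ ∧ ((L u.1 = i ∧ L v.1 = b) ∨ (L u.1 = b ∧ L v.1 = i)) ↔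
        H.G.Adj u.1 v.1 ∨
          (u.1 ≠ v.1 ∧ ((H.lab u.1 = a ∧ H.lab v.1 = b) ∨ (H.lab u.1 = b ∧ H.lab v.1 = a)))
      constructor
      · rintro (hadj | ⟨-, ⟨hui, -⟩ | ⟨-, hvi⟩⟩)
        · exact Or.inl hadj
        · exact absurd hui u.2
        · exact absurd hvi v.2
      · rintro (hadj | ⟨-, ⟨hua, -⟩ | ⟨-, hva⟩⟩)
        · exact Or.inl hadj
        · exact absurd (hLa u.1 hua) u.2
        · exact absurd (hLa v.1 hva) v.2
  · rintro (u | u) <;> rfl
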